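/- With the envelope PCA F̂ = F̂_{p,q} as above, for any translation-invariant probability measure μ on {0,?,1}^ℤ, F̂μ(?0?) = p·r²·(μ({0,?}²⟨***⟩) - μ(000⟨**⟩)), where μ({0,?}²⟨***⟩) is the μ-probability that two consecutive coordinates lie in {0,?} followed by a window of three coordinates in {0,?}³ \ {(0,0,0)}, and μ(000⟨**⟩) is the μ-probability of three consecutive 0s followed by two coordinates forming an element of {0,?}² \ {(0,0)}. -/

import Mathlib

open MeasureTheory

inductive PSym : Type
  | zero : PSym
  | quest : PSym
  | one : PSym
deriving DecidableEq

instance : Fintype PSym :=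
  ⟨{PSym.zero, PSym.quest, PSym.one}, fun x => by cases x <;> simp⟩

instance : MeasurableSpace PSym := ⊤

abbrev Config : Type := ℤ → PSym

open PSym

/-- the symbol lies in `{0, ?}` -/
def lowQ (a : PSym) : Prop := a = PSym.zero ∨ a = PSym.quest

instance : DecidablePred lowQ := fun a => by unfold lowQ; infer_instance

/-- the window `(η k, η (k+1))` lies in `{0,?}² \ {(0,0)}` -/
def star2 (η : Config) (k : ℤ) : Prop :=
  lowQ (η k) ∧ lowQ (η (k + 1)) ∧ ¬(η k = PSym.zero ∧ η (k + 1) = PSym.zero)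

/-- the window `(η k, η (k+1), η (k+2))` lies in `{0,?}³ \ {(0,0,0)}` -/
def star3 (η : Config) (k : ℤ) : Prop :=
  lowQ (η k) ∧ lowQ (η (k + 1)) ∧ lowQ (η (k + 2)) ∧
    ¬(η k = PSym.zero ∧ η (k + 1) = PSym.zero ∧ η (k + 2) = PSym.zero)

/-- translation by `k` -/
def shiftBy (k : ℤ) (η : Config) : Config := fun n => η (n + k)

/-- reflection -/
def reflect (η : Config) : Config := fun n => η (-n)

/-- the single-site stochastic update rule of the envelope PCA `F̂_{p,q}`:
`phi p q a b c d` is the probability that the output symbol is `d` when the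
neighbourhood reads `(a, b, c)`. -/
noncomputable def phi (p q : ℝ) (a b c d : PSym) : ℝ :=
  if a = PSym.zero ∧ b = PSym.zero ∧ c = PSym.zero then
    (if d = PSym.zero then p else if d = PSym.one then 1 - p else 0)
  else if lowQ a ∧ lowQ b ∧ lowQ c then
    (if d = PSym.zero then p else if d = PSym.one then q else 1 - p - q)
  else
    (if d = PSym.zero then 1 - q else if d = PSym.one then q else 0)

/-- `ν` is the pushforward of `μ` under the envelope PCA: the `ν`-probability of any
finite cylinder word is obtained by integrating, against `μ`, the product of the
single-site update probabilities (the sites being updated independently). -/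
def IsPushforward (p q : ℝ) (μ ν : Measure Config) : Prop :=
  ∀ (x : ℤ) (m : ℕ) (w : Fin m → PSym),
    (ν {η | ∀ i : Fin m, η (x + ((i : ℕ) : ℤ)) = w i}).toReal =
      ∫ η, (∏ i : Fin m,
        phi p q (η (x + ((i : ℕ) : ℤ))) (η (x + ((i : ℕ) : ℤ) + 1))
          (η (x + ((i : ℕ) : ℤ) + 2)) (w i)) ∂μ

lemma phiQuest (p q : ℝ) (a b c : PSym) :
    phi p q a b c quest =
      if lowQ a ∧ lowQ b ∧ lowQ c ∧ ¬(a = zero ∧ b = zero ∧ c = zero)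
      then 1 - p - q else 0 := by
  unfold phi
  split_ifs <;> simp_all [lowQ] <;> tauto

lemma phiZero (p q : ℝ) (a b c : PSym) :
    phi p q a b c zero = if lowQ a ∧ lowQ b ∧ lowQ c then p else 1 - q := by
  unfold phi
  split_ifs <;> simp_all [lowQ] <;> tauto

set_option maxHeartbeats 1000000 in
lemma keyProd (p q : ℝ) (a b c d e : PSym) :
    phi p q a b c quest * phi p q b c d zero * phi p q c d e quest =
      if (lowQ a ∧ lowQ b ∧ lowQ c ∧ ¬(a = zero ∧ b = zero ∧ c = zero)) ∧
         (lowQ c ∧ lowQ d ∧ lowQ e ∧ ¬(c = zero ∧ d = zero ∧ e = zero))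
      then p * (1 - p - q) ^ 2 else 0 := by
  rw [phiQuest, phiQuest, phiZero]
  split_ifs <;> first | tauto | ring

lemma measCoord (k : ℤ) (P : PSym → Prop) : MeasurableSet {η : Config | P (η k)} :=
  measurable_pi_apply k MeasurableSpace.measurableSet_top

lemma measStar3 (k : ℤ) : MeasurableSet {η : Config | star3 η k} := by
  have h : {η : Config | star3 η k} =
      ({η : Config | lowQ (η k)} ∩ {η | lowQ (η (k+1))} ∩ {η | lowQ (η (k+2))}) ∩
      ({η : Config | η k = zero} ∩ {η | η (k+1) = zero} ∩ {η | η (k+2) = zero})ᶜ := by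
    ext η; simp only [star3, Set.mem_setOf_eq, Set.mem_inter_iff, Set.mem_compl_iff]; tauto
  rw [h]
  exact (((measCoord k lowQ).inter (measCoord (k+1) lowQ)).inter (measCoord (k+2) lowQ)).inter
    ((((measCoord k (fun a => a = zero)).inter (measCoord (k+1) (fun a => a = zero))).inter
      (measCoord (k+2) (fun a => a = zero))).compl)

lemma measStar2 (k : ℤ) : MeasurableSet {η : Config | star2 η k} := by
  have h : {η : Config | star2 η k} =
      ({η : Config | lowQ (η k)} ∩ {η | lowQ (η (k+1))}) ∩
      ({η : Config | η k = zero} ∩ {η | η (k+1) = zero})ᶜ := by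
    ext η; simp only [star2, Set.mem_setOf_eq, Set.mem_inter_iff, Set.mem_compl_iff]; tauto
  rw [h]
  exact ((measCoord k lowQ).inter (measCoord (k+1) lowQ)).inter
    (((measCoord k (fun a => a = zero)).inter (measCoord (k+1) (fun a => a = zero))).compl)

lemma star3_zero_iff (η : Config) : star3 η 0 ↔
    lowQ (η 0) ∧ lowQ (η 1) ∧ lowQ (η 2) ∧
      ¬(η 0 = zero ∧ η 1 = zero ∧ η 2 = zero) := by
  norm_num [star3]

lemma star3_two_iff (η : Config) : star3 η 2 ↔
    lowQ (η 2) ∧ lowQ (η 3) ∧ lowQ (η 4) ∧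
      ¬(η 2 = zero ∧ η 3 = zero ∧ η 4 = zero) := by
  norm_num [star3]

lemma star2_three_iff (η : Config) : star2 η 3 ↔
    lowQ (η 3) ∧ lowQ (η 4) ∧ ¬(η 3 = zero ∧ η 4 = zero) := by
  norm_num [star2]

set_option maxHeartbeats 1000000 in
theorem stmt14 (p q : ℝ) (hp0 : 0 ≤ p) (hp1 : p ≤ 1) (hq0 : 0 ≤ q) (hq1 : q ≤ 1)
    (hpq : p + q ≤ 1)
    (μ ν : Measure Config) [IsProbabilityMeasure μ] [IsProbabilityMeasure ν]
    (hshift : ∀ k : ℤ, Measure.map (shiftBy k) μ = μ)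
    (hν : IsPushforward p q μ ν) :
    (ν {η | η 0 = quest ∧ η 1 = zero ∧ η 2 = quest}).toReal =
      p * (1 - p - q) ^ 2 *
        ((μ {η | lowQ (η 0) ∧ lowQ (η 1) ∧ star3 η 2}).toReal -
          (μ {η | η 0 = zero ∧ η 1 = zero ∧ η 2 = zero ∧ star2 η 3}).toReal) := by
  classical
  set S : Set Config := {η | star3 η 0 ∧ star3 η 2} with hSdef
  set C : Set Config := {η | η 0 = zero ∧ η 1 = zero ∧ η 2 = zero ∧ star2 η 3} with hCdef
  set B : Set Config := {η | lowQ (η 0) ∧ lowQ (η 1) ∧ star3 η 2} with hBdef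
  have hSmeas : MeasurableSet S := (measStar3 0).inter (measStar3 2)
  have hCmeas : MeasurableSet C := by
    have h : C = ({η : Config | η 0 = zero} ∩ {η | η 1 = zero} ∩ {η | η 2 = zero}) ∩
        {η | star2 η 3} := by
      ext η; simp only [hCdef, Set.mem_setOf_eq, Set.mem_inter_iff]; tauto
    rw [h]
    exact (((measCoord 0 (fun a => a = zero)).inter (measCoord 1 (fun a => a = zero))).inter
      (measCoord 2 (fun a => a = zero))).inter (measStar2 3)
  -- compute the ν-probability
  have h := hν 0 3 ![quest, zero, quest]
  have hset : {η : Config | ∀ i : Fin 3, η (0 + ((i : ℕ) : ℤ)) = ![quest, zero, quest] i}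
      = {η | η 0 = quest ∧ η 1 = zero ∧ η 2 = quest} := by
    ext η
    constructor
    · intro h
      refine ⟨?_, ?_, ?_⟩
      · simpa using h 0
      · simpa using h 1
      · simpa using h 2
    · rintro ⟨h0, h1, h2⟩ i
      fin_cases i <;> simpa
  rw [hset] at h
  have hfun : (fun η : Config => ∏ i : Fin 3,
      phi p q (η (0 + ((i : ℕ) : ℤ))) (η (0 + ((i : ℕ) : ℤ) + 1))
        (η (0 + ((i : ℕ) : ℤ) + 2)) (![quest, zero, quest] i))
      = S.indicator (fun _ => p * (1 - p - q) ^ 2) := by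
    funext η
    rw [Fin.prod_univ_three]
    simp only [Matrix.cons_val_zero, Matrix.cons_val_one, Matrix.head_cons,
      Matrix.cons_val_two, Matrix.tail_cons]
    norm_num
    rw [keyProd, Set.indicator_apply]
    have hiff : ((lowQ (η 0) ∧ lowQ (η 1) ∧ lowQ (η 2) ∧
          ¬(η 0 = zero ∧ η 1 = zero ∧ η 2 = zero)) ∧
        (lowQ (η 2) ∧ lowQ (η 3) ∧ lowQ (η 4) ∧
          ¬(η 2 = zero ∧ η 3 = zero ∧ η 4 = zero))) ↔ η ∈ S := by
      rw [hSdef]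
      simp only [Set.mem_setOf_eq, star3_zero_iff, star3_two_iff]
    rw [if_congr hiff rfl rfl]
  rw [hfun] at h
  rw [integral_indicator_const _ hSmeas, smul_eq_mul] at h
  -- split the measure
  have hdis : Disjoint S C := by
    rw [Set.disjoint_left]
    rintro η hS hC
    simp only [hSdef, hCdef, Set.mem_setOf_eq, star3_zero_iff] at hS hC
    exact hS.1.2.2.2 ⟨hC.1, hC.2.1, hC.2.2.1⟩
  have hunion : B = S ∪ C := by
    ext η
    simp only [hSdef, hCdef, hBdef, Set.mem_setOf_eq, Set.mem_union,
      star3_zero_iff, star3_two_iff, star2_three_iff]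
    constructor
    · rintro ⟨h0, h1, l2, l3, l4, hn⟩
      by_cases hz : η 0 = zero ∧ η 1 = zero ∧ η 2 = zero
      · exact Or.inr ⟨hz.1, hz.2.1, hz.2.2, l3, l4, fun hc => hn ⟨hz.2.2, hc.1, hc.2⟩⟩
      · exact Or.inl ⟨⟨h0, h1, l2, hz⟩, l2, l3, l4, hn⟩
    · rintro (⟨⟨h0, h1, l2, _⟩, hs2⟩ | ⟨e0, e1, e2, l3, l4, hn⟩)
      · exact ⟨h0, h1, hs2⟩
      · exact ⟨Or.inl e0, Or.inl e1, Or.inl e2, l3, l4, fun hc => hn ⟨hc.2.1, hc.2.2⟩⟩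
  have hadd : (μ B).toReal = (μ S).toReal + (μ C).toReal := by
    rw [hunion, measure_union hdis hCmeas,
      ENNReal.toReal_add (measure_ne_top μ S) (measure_ne_top μ C)]
  rw [h, hadd, measureReal_def]
  ring
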